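/- In the free monoid on the two-letter alphabet {a, b}, let ≈ be the smallest monoid congruence containing the pairs (aaa, aa), (bbb, bb), and (ab, bbaa). Then aab is not congruent to bbaa: ¬(aab ≈ bbaa). -/
import Mathlib

/-! ## Statement 19: `aab` is not congruent to `bbaa`.

Words in the free monoid on the two-letter alphabet `{a, b}` are modelled as
lists over `Bool`, with `a` encoded as `true` and `b` as `false`;
concatenation of words is list append. -/

/-- The smallest monoid congruence on words over `{a, b}` containing the pairs
`(aaa, aa)`, `(bbb, bb)` and `(ab, bbaa)`: the closure of these pairs under
reflexivity, symmetry, transitivity and concatenation. -/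
inductive MonCong : List Bool → List Bool → Prop
  | aaa : MonCong [true, true, true] [true, true]
  | bbb : MonCong [false, false, false] [false, false]
  | ab : MonCong [true, false] [false, false, true, true]
  | refl (u : List Bool) : MonCong u u
  | symm {u v : List Bool} : MonCong u v → MonCong v u
  | trans {u v w : List Bool} : MonCong u v → MonCong v w → MonCong u w
  | mul {u u' v v' : List Bool} :
      MonCong u u' → MonCong v v' → MonCong (u ++ v) (u' ++ v')

def fA : Fin 4 → Fin 4 := ![0, 0, 1, 3]
def fB : Fin 4 → Fin 4 := ![0, 1, 1, 2]

def ev : List Bool → Fin 4 → Fin 4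
  | [] => id
  | x :: xs => (if x then fA else fB) ∘ ev xs

lemma ev_append (u v : List Bool) : ev (u ++ v) = ev u ∘ ev v := by
  induction u with
  | nil => rfl
  | cons x xs ih => simp [ev, ih, Function.comp_assoc]

lemma cong_ev {u v : List Bool} (h : MonCong u v) : ev u = ev v := by
  induction h with
  | aaa => decide
  | bbb => decide
  | ab => decide
  | refl u => rfl
  | symm _ ih => exact ih.symm
  | trans _ _ ih1 ih2 => exact ih1.trans ih2
  | mul _ _ ih1 ih2 => rw [ev_append, ev_append, ih1, ih2]

/-- In the free monoid on `{a, b}`, `aab` is not congruent to `bbaa` modulo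
the smallest monoid congruence containing `aaa = aa`, `bbb = bb`, `ab = bbaa`. -/
theorem aab_not_congruent_bbaa :
    ¬ MonCong [true, true, false] [false, false, true, true] := by
  intro h
  have := cong_ev h
  exact absurd this (by decide)
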